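/- Let A be an evolution algebra with natural basis B and let I be a maximal ideal of A with dim(A/I) ≠ 1. Then for any e ∈ B, e² ∈ I implies e ∈ I; in other words H_I = I ∩ B. -/

import Mathlib

variable {K ι A : Type*}

section Defs
variable [Field K] [NonUnitalNonAssocCommRing A] [Module K A]
  [SMulCommClass K A A] [IsScalarTower K A A]

/-- A natural basis: distinct basis elements multiply to zero. -/
def IsNaturalBasis (b : Module.Basis ι K A) : Prop := ∀ i j : ι, i ≠ j → b i * b j = 0

/-- Edge i → j in the associated graph: the j-th coordinate of (b i)² is nonzero. -/
def EvolEdge (b : Module.Basis ι K A) (i j : ι) : Prop := b.repr (b i * b i) j ≠ 0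

/-- Hereditary subset of vertices: closed under edges (hence under reachability). -/
def EvolHereditary (b : Module.Basis ι K A) (H : Set ι) : Prop :=
  ∀ i ∈ H, ∀ j, EvolEdge b i j → j ∈ H

/-- Saturated subset: a regular vertex all of whose edge-targets lie in H belongs to H. -/
def EvolSaturated (b : Module.Basis ι K A) (H : Set ι) : Prop :=
  ∀ i : ι, b i * b i ≠ 0 → (∀ j, EvolEdge b i j → j ∈ H) → i ∈ H

/-- Ideal of a (nonunital, nonassociative, commutative) algebra: a submodule absorbing
multiplication. -/
def IsEvolIdeal (I : Submodule K A) : Prop := ∀ a : A, ∀ x ∈ I, a * x ∈ I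

/-- I_H, the span of the basis elements indexed by H. -/
def idealOf (b : Module.Basis ι K A) (H : Set ι) : Submodule K A := Submodule.span K (b '' H)

/-- H_I = {e ∈ B : e² ∈ I}. -/
def hSet (b : Module.Basis ι K A) (I : Submodule K A) : Set ι := {i | b i * b i ∈ I}

/-- Maximal ideal. -/
def IsMaxIdeal (I : Submodule K A) : Prop :=
  IsEvolIdeal I ∧ I ≠ ⊤ ∧
    ∀ J : Submodule K A, IsEvolIdeal J → I ≤ J → J = I ∨ J = ⊤

/-- Absorption property of an ideal. -/
def Absorption (I : Submodule K A) : Prop := ∀ x : A, (∀ a : A, x * a ∈ I) → x ∈ I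

end Defs

/-- A², the span of all products. -/
def sqIdeal (K A : Type*) [Field K] [NonUnitalNonAssocCommRing A] [Module K A] :
    Submodule K A :=
  Submodule.span K {x : A | ∃ a c : A, x = a * c}

variable [Field K] [NonUnitalNonAssocCommRing A] [Module K A]
  [SMulCommClass K A A] [IsScalarTower K A A]

lemma mul_basis_eq (b : Module.Basis ι K A) (hb : IsNaturalBasis b) (a : A) (i : ι) :
    a * b i = b.repr a i • (b i * b i) := by
  conv_lhs => rw [← b.linearCombination_repr a]
  rw [Finsupp.linearCombination_apply, ← LinearMap.mulRight_apply (R := K), map_finsuppSum]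
  simp only [LinearMap.mulRight_apply, smul_mul_assoc]
  rw [Finsupp.sum_eq_single i]
  · intro j _ hji
    rw [hb j i hji, smul_zero]
  · intro _; rw [zero_smul]

theorem stmt13 (b : Module.Basis ι K A) (hb : IsNaturalBasis b) (I : Submodule K A)
    (hI : IsMaxIdeal I) (hr : Module.rank K (A ⧸ I) ≠ 1) :
    hSet b I = {i : ι | b i ∈ I} := by
  obtain ⟨hid, hne, hmax⟩ := hI
  ext i
  simp only [hSet, Set.mem_setOf_eq]
  constructor
  · intro hsq
    by_contra hni
    set J := I ⊔ K ∙ (b i) with hJ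
    have hJid : IsEvolIdeal J := by
      intro a x hx
      rw [Submodule.mem_sup] at hx
      obtain ⟨y, hy, z, hz, rfl⟩ := hx
      obtain ⟨c, rfl⟩ := Submodule.mem_span_singleton.mp hz
      have : a * (y + c • b i) = a * y + c • (a * b i) := by
        rw [mul_add, mul_smul_comm]
      rw [this]
      refine Submodule.mem_sup_left (I.add_mem (hid a y hy) ?_)
      rw [mul_basis_eq b hb a i]
      exact I.smul_mem _ (I.smul_mem _ hsq)
    rcases hmax J hJid le_sup_left with h | h
    · exact hni (h ▸ Submodule.mem_sup_right (Submodule.mem_span_singleton_self _))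
    · -- quotient spanned by mk (b i)
      have hspan : Submodule.span K {Submodule.Quotient.mk (p := I) (b i)} = ⊤ := by
        have := congrArg (Submodule.map I.mkQ) h
        rw [Submodule.map_sup, Submodule.map_top, Submodule.range_mkQ,
          Submodule.map_span] at this
        rw [Submodule.mkQ_map_self, bot_sup_eq, Set.image_singleton] at this
        exact this
      have h1 : Module.rank K (A ⧸ I) ≤ 1 := by
        rw [rank_le_one_iff]
        refine ⟨Submodule.Quotient.mk (b i), fun w => ?_⟩
        have hw : w ∈ Submodule.span K {Submodule.Quotient.mk (p := I) (b i)} :=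
          hspan ▸ Submodule.mem_top
        obtain ⟨c, hc⟩ := Submodule.mem_span_singleton.mp hw
        exact ⟨c, hc⟩
      have hnt : Nontrivial (A ⧸ I) := Submodule.Quotient.nontrivial_iff.mpr hne
      have hpos : 0 < Module.rank K (A ⧸ I) := rank_pos
      rcases lt_or_eq_of_le h1 with hlt | heq
      · exact absurd (Cardinal.lt_one_iff_zero.mp hlt) hpos.ne'
      · exact hr heq
  · intro hi
    exact hid (b i) _ hi
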